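/- arXiv:0909.2860 — 3 statements merged into one kernel-verified Lean document; each statement's English description precedes it below -/
import Mathlib

section
/- Let A and B be C*-algebras, let φ : A → M(B) and ψ : B → M(A) be nondegenerate ⋆-homomorphisms, and let φ̄ : M(A) → M(B) and ψ̄ : M(B) → M(A) be ⋆-homomorphisms satisfying φ̄ ∘ ι_A = φ and ψ̄ ∘ ι_B = ψ. Suppose ψ̄(φ(a)) = ι_A(a) for all a ∈ A and φ̄(ψ(b)) = ι_B(b) for all b ∈ B (i.e., φ and ψ are mutually inverse morphisms in the nondegenerate category). Then the range of φ equals the range of ι_B, and there is a ⋆-algebra isomorphism θ : A ≃ B with ι_B ∘ θ = φ, whose inverse θ⁻¹ satisfies ι_A ∘ θ⁻¹ = ψ. In other words, the isomorphisms in the category of C*-algebras with nondegenerate homomorphisms into multiplier algebras as morphisms are exactly the usual ⋆-isomorphisms of C*-algebras. -/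
open scoped MultiplierAlgebra

/-- A ⋆-homomorphism `φ : A → M(B)` is *nondegenerate* if the closed linear span of
`{φ a * ι_B b : a ∈ A, b ∈ B}` equals the range of the canonical embedding
`ι_B : B → M(B)`. -/
def NonUnitalStarAlgHom.NondegenerateIntoMultiplier {A B : Type*}
    [NonUnitalCStarAlgebra A] [NonUnitalCStarAlgebra B]
    (φ : A →⋆ₙₐ[ℂ] 𝓜(ℂ, B)) : Prop :=
  closure ((Submodule.span ℂ
      {x : 𝓜(ℂ, B) | ∃ (a : A) (b : B), x = φ a * (b : 𝓜(ℂ, B))} :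
        Submodule ℂ 𝓜(ℂ, B)) : Set 𝓜(ℂ, B)) =
    Set.range ((↑) : B → 𝓜(ℂ, B))

open scoped CStarAlgebra


namespace MultiplierIsoAux

variable {A : Type*} [NonUnitalCStarAlgebra A]

lemma norm_coe (a : A) : ‖(a : 𝓜(ℂ, A))‖ = ‖a‖ := by
  rw [← DoubleCentralizer.norm_fst, DoubleCentralizer.coe_fst,
    ContinuousLinearMap.opNorm_mul_apply]

lemma isometry_coe : Isometry ((↑) : A → 𝓜(ℂ, A)) := by
  have := AddMonoidHomClass.isometry_of_norm
    (DoubleCentralizer.coeHom (𝕜 := ℂ) (A := A)) norm_coe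
  exact this

lemma injective_coe : Function.Injective ((↑) : A → 𝓜(ℂ, A)) :=
  isometry_coe.injective

lemma isClosed_range_coe : IsClosed (Set.range ((↑) : A → 𝓜(ℂ, A))) :=
  isometry_coe.isClosedEmbedding.isClosed_range

lemma fst_mul (m : 𝓜(ℂ, A)) (a x : A) : m.fst (a * x) = m.fst a * x := by
  set d := m.fst (a * x) - m.fst a * x with hd
  have h : ∀ b : A, b * m.fst (a * x) = b * (m.fst a * x) := fun b => by
    rw [← m.central b (a * x), ← mul_assoc, m.central b a, mul_assoc]
  have h2 : star d * d = 0 := by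
    rw [hd, mul_sub, h (star d), sub_self]
  exact sub_eq_zero.mp (CStarRing.star_mul_self_eq_zero_iff d |>.mp h2)

lemma snd_mul (m : 𝓜(ℂ, A)) (a x : A) : m.snd (x * a) = x * m.snd a := by
  set d := m.snd (x * a) - x * m.snd a with hd
  have h : ∀ b : A, m.snd (x * a) * b = (x * m.snd a) * b := fun b => by
    rw [m.central (x * a) b, mul_assoc, ← m.central a b, ← mul_assoc]
  have h2 : d * star d = 0 := by
    rw [hd, sub_mul, h (star d), sub_self]
  exact sub_eq_zero.mp (CStarRing.mul_star_self_eq_zero_iff d |>.mp h2)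

lemma mul_coe_eq (m : 𝓜(ℂ, A)) (a : A) :
    m * (a : 𝓜(ℂ, A)) = ((m.fst a : A) : 𝓜(ℂ, A)) := by
  refine DoubleCentralizer.ext _ _ _ _ (Prod.ext ?_ ?_)
  · show (m * (a : 𝓜(ℂ, A))).fst = ((m.fst a : A) : 𝓜(ℂ, A)).fst
    rw [DoubleCentralizer.mul_fst, DoubleCentralizer.coe_fst, DoubleCentralizer.coe_fst]
    ext x
    simp only [ContinuousLinearMap.mul_apply, ContinuousLinearMap.mul_apply']
    exact fst_mul m a x
  · show (m * (a : 𝓜(ℂ, A))).snd = ((m.fst a : A) : 𝓜(ℂ, A)).snd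
    rw [DoubleCentralizer.mul_snd, DoubleCentralizer.coe_snd, DoubleCentralizer.coe_snd]
    ext x
    simp only [ContinuousLinearMap.mul_apply, ContinuousLinearMap.flip_apply,
      ContinuousLinearMap.mul_apply']
    exact m.central x a

lemma coe_mul_eq (m : 𝓜(ℂ, A)) (a : A) :
    (a : 𝓜(ℂ, A)) * m = ((m.snd a : A) : 𝓜(ℂ, A)) := by
  refine DoubleCentralizer.ext _ _ _ _ (Prod.ext ?_ ?_)
  · show ((a : 𝓜(ℂ, A)) * m).fst = ((m.snd a : A) : 𝓜(ℂ, A)).fst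
    rw [DoubleCentralizer.mul_fst, DoubleCentralizer.coe_fst, DoubleCentralizer.coe_fst]
    ext x
    simp only [ContinuousLinearMap.mul_apply, ContinuousLinearMap.mul_apply']
    exact (m.central a x).symm
  · show ((a : 𝓜(ℂ, A)) * m).snd = ((m.snd a : A) : 𝓜(ℂ, A)).snd
    rw [DoubleCentralizer.mul_snd, DoubleCentralizer.coe_snd, DoubleCentralizer.coe_snd]
    ext x
    simp only [ContinuousLinearMap.mul_apply, ContinuousLinearMap.flip_apply,
      ContinuousLinearMap.mul_apply']
    exact snd_mul m a x

variable {B : Type*} [NonUnitalCStarAlgebra B]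

/-- The key range fact: under the mutual-inverse hypotheses, `φ` takes values in the
range of the canonical embedding `ι_B : B → 𝓜(ℂ, B)`. -/
lemma mem_range_of_inv
    (φ : A →⋆ₙₐ[ℂ] 𝓜(ℂ, B))
    (ψ : B →⋆ₙₐ[ℂ] 𝓜(ℂ, A)) (hψ : ψ.NondegenerateIntoMultiplier)
    (φbar : 𝓜(ℂ, A) →⋆ₙₐ[ℂ] 𝓜(ℂ, B)) (hφbar : ∀ a : A, φbar (a : 𝓜(ℂ, A)) = φ a)
    (hinv₂ : ∀ b : B, φbar (ψ b) = (b : 𝓜(ℂ, B))) (a : A) :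
    φ a ∈ Set.range ((↑) : B → 𝓜(ℂ, B)) := by
  have hmem : (a : 𝓜(ℂ, A)) ∈ closure ((Submodule.span ℂ
      {x : 𝓜(ℂ, A) | ∃ (b : B) (a' : A), x = ψ b * (a' : 𝓜(ℂ, A))} :
        Submodule ℂ 𝓜(ℂ, A)) : Set 𝓜(ℂ, A)) := by
    rw [hψ]; exact ⟨a, rfl⟩
  set S : Set 𝓜(ℂ, A) := {x : 𝓜(ℂ, A) | ∃ (b : B) (a' : A), x = ψ b * (a' : 𝓜(ℂ, A))}
  let l : 𝓜(ℂ, A) →ₗ[ℂ] 𝓜(ℂ, B) :=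
    { toFun := φbar, map_add' := map_add φbar, map_smul' := map_smul φbar }
  let cB : B →ₗ[ℂ] 𝓜(ℂ, B) :=
    { toFun := (↑), map_add' := map_add (DoubleCentralizer.coeHom (𝕜 := ℂ) (A := B)),
      map_smul' := map_smul (DoubleCentralizer.coeHom (𝕜 := ℂ) (A := B)) }
  have hspan : Submodule.span ℂ S ≤ (LinearMap.range cB).comap l := by
    rw [Submodule.span_le]
    rintro x ⟨b, a', rfl⟩
    have h : φbar (ψ b * (a' : 𝓜(ℂ, A))) = (b : 𝓜(ℂ, B)) * φ a' := by
      rw [map_mul, hinv₂, hφbar]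
    refine ⟨(φ a').snd b, ?_⟩
    show (((φ a').snd b : B) : 𝓜(ℂ, B)) = φbar (ψ b * (a' : 𝓜(ℂ, A)))
    rw [h, coe_mul_eq]
  have hcont : Continuous φbar := map_continuous φbar
  have h2 : φbar (a : 𝓜(ℂ, A)) ∈ closure (φbar '' (Submodule.span ℂ S : Set 𝓜(ℂ, A))) :=
    image_closure_subset_closure_image hcont ⟨_, hmem, rfl⟩
  have h3 : closure (φbar '' (Submodule.span ℂ S : Set 𝓜(ℂ, A))) ⊆
      Set.range ((↑) : B → 𝓜(ℂ, B)) := by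
    rw [← isClosed_range_coe.closure_eq]
    apply closure_mono
    rintro _ ⟨y, hy, rfl⟩
    obtain ⟨b, hb⟩ := Submodule.mem_comap.mp (hspan hy)
    exact ⟨b, hb⟩
  rw [← hφbar a]
  exact h3 h2

end MultiplierIsoAux


/-- If `φ : A → M(B)` and `ψ : B → M(A)` are nondegenerate ⋆-homomorphisms which are
mutually inverse in the nondegenerate category (i.e. `ψ̄ ∘ φ = ι_A` and `φ̄ ∘ ψ = ι_B`
for extensions `φ̄`, `ψ̄` to the multiplier algebras), then `φ` has range exactly
`ι_B(B)`, and there is a ⋆-isomorphism `θ : A ≃ B` with `ι_B ∘ θ = φ` and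
`ι_A ∘ θ⁻¹ = ψ`. -/
theorem isomorphisms_in_nondegenerate_category_are_star_isomorphisms
    {A B : Type*} [NonUnitalCStarAlgebra A] [NonUnitalCStarAlgebra B]
    (φ : A →⋆ₙₐ[ℂ] 𝓜(ℂ, B)) (hφ : φ.NondegenerateIntoMultiplier)
    (ψ : B →⋆ₙₐ[ℂ] 𝓜(ℂ, A)) (hψ : ψ.NondegenerateIntoMultiplier)
    (φbar : 𝓜(ℂ, A) →⋆ₙₐ[ℂ] 𝓜(ℂ, B)) (hφbar : ∀ a : A, φbar (a : 𝓜(ℂ, A)) = φ a)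
    (ψbar : 𝓜(ℂ, B) →⋆ₙₐ[ℂ] 𝓜(ℂ, A)) (hψbar : ∀ b : B, ψbar (b : 𝓜(ℂ, B)) = ψ b)
    (hinv₁ : ∀ a : A, ψbar (φ a) = (a : 𝓜(ℂ, A)))
    (hinv₂ : ∀ b : B, φbar (ψ b) = (b : 𝓜(ℂ, B))) :
    Set.range φ = Set.range ((↑) : B → 𝓜(ℂ, B)) ∧
      ∃ θ : A ≃⋆ₐ[ℂ] B,
        (∀ a : A, ((θ a : B) : 𝓜(ℂ, B)) = φ a) ∧
        (∀ b : B, ((θ.symm b : A) : 𝓜(ℂ, A)) = ψ b) := by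
  obtain ⟨f, hf⟩ := Classical.axiomOfChoice
    (fun a : A => MultiplierIsoAux.mem_range_of_inv φ ψ hψ φbar hφbar hinv₂ a)
  obtain ⟨g, hg⟩ := Classical.axiomOfChoice
    (fun b : B => MultiplierIsoAux.mem_range_of_inv ψ φ hφ ψbar hψbar hinv₁ b)
  -- hf : ∀ a, ↑(f a) = φ a ; hg : ∀ b, ↑(g b) = ψ b
  have injA : Function.Injective ((↑) : A → 𝓜(ℂ, A)) := MultiplierIsoAux.injective_coe
  have injB : Function.Injective ((↑) : B → 𝓜(ℂ, B)) := MultiplierIsoAux.injective_coe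
  have hgf : ∀ a : A, g (f a) = a := fun a => by
    apply injA
    rw [hg, ← hψbar, hf, hinv₁]
  have hfg : ∀ b : B, f (g b) = b := fun b => by
    apply injB
    rw [hf, ← hφbar, hg, hinv₂]
  have cB := DoubleCentralizer.coeHom (𝕜 := ℂ) (A := B)
  have coe_mul : ∀ x y : B, ((x * y : B) : 𝓜(ℂ, B)) = (x : 𝓜(ℂ, B)) * y :=
    map_mul (DoubleCentralizer.coeHom (𝕜 := ℂ) (A := B))
  have coe_add : ∀ x y : B, ((x + y : B) : 𝓜(ℂ, B)) = (x : 𝓜(ℂ, B)) + y :=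
    map_add (DoubleCentralizer.coeHom (𝕜 := ℂ) (A := B))
  have coe_smul : ∀ (r : ℂ) (x : B), ((r • x : B) : 𝓜(ℂ, B)) = r • (x : 𝓜(ℂ, B)) :=
    fun r x => map_smul (DoubleCentralizer.coeHom (𝕜 := ℂ) (A := B)) r x
  have coe_star : ∀ x : B, ((star x : B) : 𝓜(ℂ, B)) = star (x : 𝓜(ℂ, B)) :=
    map_star (DoubleCentralizer.coeHom (𝕜 := ℂ) (A := B))
  let θ : A ≃⋆ₐ[ℂ] B :=
    { toFun := f
      invFun := g
      left_inv := hgf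
      right_inv := hfg
      map_add' := fun x y => injB <| by rw [coe_add, hf, hf, hf, map_add]
      map_mul' := fun x y => injB <| by rw [coe_mul, hf, hf, hf, map_mul]
      map_smul' := fun r x => injB <| by rw [coe_smul, hf, hf, map_smul]
      map_star' := fun x => injB <| by rw [coe_star, hf, hf, map_star] }
  refine ⟨?_, θ, fun a => hf a, fun b => hg b⟩
  apply Set.Subset.antisymm
  · rintro _ ⟨a, rfl⟩
    exact MultiplierIsoAux.mem_range_of_inv φ ψ hψ φbar hφbar hinv₂ a
  · rintro _ ⟨b, rfl⟩
    exact ⟨g b, by rw [← hφbar (g b), hg, hinv₂]⟩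
end

section
/- Let X and Y be locally compact Hausdorff spaces and let φ : C₀(Y) → C_b(X) be a nondegenerate ⋆-homomorphism. Then there exists a unique continuous map f : X → Y such that φ(a) = a ∘ f for all a ∈ C₀(Y). (The functor C₀ is full: every nondegenerate ⋆-homomorphism C₀(Y) → M(C₀(X)) ≅ C_b(X) is of the form C₀(f).) -/
open scoped ZeroAtInfty BoundedContinuousFunction

/-- A ⋆-homomorphism `φ : C₀(Y) → C_b(X) = M(C₀(X))` is *nondegenerate* if the closed
linear span of the products `φ a · b` (with `a ∈ C₀(Y)`, `b ∈ C₀(X)`), which all lie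
in `C₀(X)`, equals `C₀(X)`. -/
def NondegenerateC0 {X Y : Type*} [TopologicalSpace X] [TopologicalSpace Y]
    (φ : C₀(Y, ℂ) →⋆ₙₐ[ℂ] (X →ᵇ ℂ)) : Prop :=
  closure ((Submodule.span ℂ
      {h : C₀(X, ℂ) | ∃ (a : C₀(Y, ℂ)) (b : C₀(X, ℂ)), ∀ x, h x = φ a x * b x} :
        Submodule ℂ C₀(X, ℂ)) : Set C₀(X, ℂ)) = Set.univ

noncomputable section

namespace C0Full

open Filter OnePoint WeakDual Set Topology

variable {Y : Type*} [TopologicalSpace Y] [T2Space Y]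

/-- Extension by zero of a `C₀` function to the one-point compactification. -/
def ext' (a : C₀(Y, ℂ)) : C(OnePoint Y, ℂ) :=
  OnePoint.continuousMapMk a.toContinuousMap 0
    (by rw [coclosedCompact_eq_cocompact]; exact zero_at_infty a)

@[simp] lemma ext'_infty (a : C₀(Y, ℂ)) : ext' a ∞ = 0 := rfl

@[simp] lemma ext'_coe (a : C₀(Y, ℂ)) (y : Y) : ext' a y = a y := rfl

/-- Restriction to `Y`, normalized to vanish at infinity. -/
def res (g : C(OnePoint Y, ℂ)) : C₀(Y, ℂ) where
  toFun y := g y - g ∞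
  continuous_toFun := (g.continuous.comp continuous_coe).sub continuous_const
  zero_at_infty' := by
    have h : Tendsto (fun y : Y => g y) (cocompact Y) (𝓝 (g ∞)) := by
      rw [← coclosedCompact_eq_cocompact]
      exact (g.continuous.tendsto ∞).comp tendsto_coe_infty
    simpa using h.sub (tendsto_const_nhds (x := g ∞))

@[simp] lemma res_apply (g : C(OnePoint Y, ℂ)) (y : Y) : res g y = g y - g ∞ := rfl

@[simp] lemma res_ext' (a : C₀(Y, ℂ)) : res (ext' a) = a := by
  ext y; simp

lemma res_add (g h : C(OnePoint Y, ℂ)) : res (g + h) = res g + res h := by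
  ext y; simp; ring

lemma res_smul (c : ℂ) (g : C(OnePoint Y, ℂ)) : res (c • g) = c • res g := by
  ext y; simp; ring

lemma res_one : res (1 : C(OnePoint Y, ℂ)) = 0 := by ext y; simp

lemma res_mul (g h : C(OnePoint Y, ℂ)) :
    res (g * h) = res g * res h + g ∞ • res h + h ∞ • res g := by
  ext y; simp; ring

lemma norm_res_le (g : C(OnePoint Y, ℂ)) : ‖res g‖ ≤ 2 * ‖g‖ := by
  rw [← ZeroAtInftyContinuousMap.norm_toBCF_eq_norm]
  refine (BoundedContinuousFunction.norm_le (by positivity)).mpr fun y => ?_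
  calc ‖g y - g ∞‖ ≤ ‖g (y : OnePoint Y)‖ + ‖g ∞‖ := norm_sub_le _ _
    _ ≤ ‖g‖ + ‖g‖ := add_le_add (g.norm_coe_le_norm _) (g.norm_coe_le_norm _)
    _ = 2 * ‖g‖ := by ring

variable {X : Type*} [TopologicalSpace X]

/-- The candidate character, as a linear map. -/
def psiL (φ : C₀(Y, ℂ) →⋆ₙₐ[ℂ] (X →ᵇ ℂ)) (x : X) : C(OnePoint Y, ℂ) →ₗ[ℂ] ℂ where
  toFun g := g ∞ + φ (res g) x
  map_add' g h := by
    simp only [ContinuousMap.add_apply, res_add, map_add,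
      BoundedContinuousFunction.add_apply]
    ring
  map_smul' c g := by
    simp only [ContinuousMap.smul_apply, res_smul, _root_.map_smul,
      BoundedContinuousFunction.smul_apply, RingHom.id_apply, smul_eq_mul]
    ring

/-- The candidate character, as an element of the weak dual. -/
def psi (φ : C₀(Y, ℂ) →⋆ₙₐ[ℂ] (X →ᵇ ℂ)) (x : X) : WeakDual ℂ C(OnePoint Y, ℂ) :=
  LinearMap.mkContinuous (psiL φ x) 3 (fun g => by
    calc ‖g ∞ + φ (res g) x‖ ≤ ‖g ∞‖ + ‖φ (res g) x‖ := norm_add_le _ _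
      _ ≤ ‖g‖ + ‖φ (res g)‖ := add_le_add (g.norm_coe_le_norm _)
          ((φ (res g)).norm_coe_le_norm x)
      _ ≤ ‖g‖ + ‖res g‖ := add_le_add_right (NonUnitalStarAlgHom.norm_apply_le φ _) _
      _ ≤ ‖g‖ + 2 * ‖g‖ := add_le_add_right (norm_res_le g) _
      _ = 3 * ‖g‖ := by ring)

@[simp] lemma psi_apply (φ : C₀(Y, ℂ) →⋆ₙₐ[ℂ] (X →ᵇ ℂ)) (x : X) (g : C(OnePoint Y, ℂ)) :
    psi φ x g = g ∞ + φ (res g) x := rfl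

lemma psi_one (φ : C₀(Y, ℂ) →⋆ₙₐ[ℂ] (X →ᵇ ℂ)) (x : X) : psi φ x 1 = 1 := by
  simp [psi_apply, res_one]

lemma psi_mul (φ : C₀(Y, ℂ) →⋆ₙₐ[ℂ] (X →ᵇ ℂ)) (x : X) (g h : C(OnePoint Y, ℂ)) :
    psi φ x (g * h) = psi φ x g * psi φ x h := by
  simp only [psi_apply, res_mul, map_add, map_mul, _root_.map_smul, ContinuousMap.mul_apply,
    BoundedContinuousFunction.add_apply, BoundedContinuousFunction.mul_apply,
    BoundedContinuousFunction.smul_apply, smul_eq_mul]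
  ring

/-- The candidate character. -/
def char (φ : C₀(Y, ℂ) →⋆ₙₐ[ℂ] (X →ᵇ ℂ)) (x : X) :
    characterSpace ℂ C(OnePoint Y, ℂ) :=
  ⟨psi φ x, by
    rw [WeakDual.CharacterSpace.eq_set_map_one_map_mul]
    exact ⟨psi_one φ x, psi_mul φ x⟩⟩

variable [LocallyCompactSpace Y]

/-- The point of `OnePoint Y` corresponding to the character. -/
def pt (φ : C₀(Y, ℂ) →⋆ₙₐ[ℂ] (X →ᵇ ℂ)) (x : X) : OnePoint Y :=
  (WeakDual.CharacterSpace.homeoEval (OnePoint Y) ℂ).symm (char φ x)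

lemma eval_pt (φ : C₀(Y, ℂ) →⋆ₙₐ[ℂ] (X →ᵇ ℂ)) (x : X) (g : C(OnePoint Y, ℂ)) :
    g (pt φ x) = psi φ x g := by
  have h1 : (WeakDual.CharacterSpace.homeoEval (OnePoint Y) ℂ) (pt φ x) = char φ x :=
    Homeomorph.apply_symm_apply _ _
  have h2 : ((WeakDual.CharacterSpace.homeoEval (OnePoint Y) ℂ) (pt φ x)) g = g (pt φ x) := rfl
  rw [← h2, h1]; rfl

lemma continuous_pt (φ : C₀(Y, ℂ) →⋆ₙₐ[ℂ] (X →ᵇ ℂ)) : Continuous fun x : X => pt φ x := by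
  have h1 : Continuous fun x : X => psi φ x := by
    apply WeakDual.continuous_of_continuous_eval
    intro g
    exact continuous_const.add ((φ (res g)).continuous)
  have h2 : Continuous fun x : X => char φ x := Continuous.subtype_mk h1 _
  exact ((WeakDual.CharacterSpace.homeoEval (OnePoint Y) ℂ).symm.continuous).comp h2

/-- Urysohn-type separation by a `C₀` function. -/
lemma exists_c0_sep {Z : Type*} [TopologicalSpace Z] [LocallyCompactSpace Z] [T2Space Z]
    (z : Z) (t : Set Z) (ht : IsClosed t) (hz : z ∉ t) :
    ∃ c : C₀(Z, ℂ), c z = 1 ∧ ∀ w ∈ t, c w = 0 := by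
  obtain ⟨K, hK, hKz⟩ := exists_compact_mem_nhds z
  have hzint : z ∈ interior K := mem_interior_iff_mem_nhds.mpr hKz
  have ht' : IsClosed ((interior K)ᶜ ∪ t) := isOpen_interior.isClosed_compl.union ht
  have hd : Disjoint {z} ((interior K)ᶜ ∪ t) := by
    simp only [Set.disjoint_singleton_left, Set.mem_union, Set.mem_compl_iff, not_or, not_not]
    exact ⟨hzint, hz⟩
  obtain ⟨f, hf0, hf1, -⟩ :=
    exists_continuous_zero_one_of_isCompact' isCompact_singleton ht' hd
  have hsupp : Function.support f ⊆ interior K := by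
    intro w hw
    by_contra hwK
    exact hw (hf0 (Or.inl hwK))
  have hcs : HasCompactSupport f :=
    IsCompact.of_isClosed_subset hK (isClosed_tsupport f)
      (closure_minimal (hsupp.trans interior_subset) hK.isClosed)
  have hcsC : HasCompactSupport fun w => ((f w : ℝ) : ℂ) :=
    hcs.comp_left Complex.ofReal_zero
  refine ⟨⟨⟨fun w => ((f w : ℝ) : ℂ), Complex.continuous_ofReal.comp f.continuous⟩,
    hcsC.is_zero_at_infty⟩, ?_, ?_⟩
  · have := hf1 (Set.mem_singleton z)
    simp only [ZeroAtInftyContinuousMap.coe_mk, ContinuousMap.coe_mk]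
    rw [show f z = 1 from this]
    norm_num
  · intro w hw
    have := hf0 (Or.inr hw)
    simp only [ZeroAtInftyContinuousMap.coe_mk, ContinuousMap.coe_mk]
    rw [show f w = 0 from this]
    norm_num

/-- Nondegeneracy gives a nonvanishing element at each point. -/
lemma exists_ne_zero [LocallyCompactSpace X] [T2Space X]
    (φ : C₀(Y, ℂ) →⋆ₙₐ[ℂ] (X →ᵇ ℂ)) (hφ : NondegenerateC0 φ) (x : X) :
    ∃ a : C₀(Y, ℂ), φ a x ≠ 0 := by
  by_contra hc
  push_neg at hc
  have hcont : Continuous fun h : C₀(X, ℂ) => h x :=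
    (continuous_eval_const (F := X →ᵇ ℂ) x).comp
      ZeroAtInftyContinuousMap.isometry_toBCF.continuous
  have hZ : IsClosed {h : C₀(X, ℂ) | h x = 0} :=
    isClosed_singleton.preimage hcont
  -- the evaluation functional as a linear map
  let E : C₀(X, ℂ) →ₗ[ℂ] ℂ :=
    { toFun := fun h => h x
      map_add' := fun u v => rfl
      map_smul' := fun c u => rfl }
  have hspan : (Submodule.span ℂ
      {h : C₀(X, ℂ) | ∃ (a : C₀(Y, ℂ)) (b : C₀(X, ℂ)), ∀ x', h x' = φ a x' * b x'})
      ≤ LinearMap.ker E := by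
    rw [Submodule.span_le]
    rintro h ⟨a, b, hab⟩
    simp only [SetLike.mem_coe, LinearMap.mem_ker]
    show h x = 0
    rw [hab x, hc a, zero_mul]
  have hker : ∀ h ∈ closure ((Submodule.span ℂ
      {h : C₀(X, ℂ) | ∃ (a : C₀(Y, ℂ)) (b : C₀(X, ℂ)), ∀ x', h x' = φ a x' * b x'} :
        Submodule ℂ C₀(X, ℂ)) : Set C₀(X, ℂ)), h x = 0 := by
    intro h hh
    have : h ∈ {h : C₀(X, ℂ) | h x = 0} :=
      closure_minimal (fun u hu => hspan hu) hZ hh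
    exact this
  obtain ⟨c, hc1, -⟩ := exists_c0_sep x (∅ : Set X) isClosed_empty (Set.notMem_empty x)
  have : c x = 0 := hker c (by rw [hφ]; trivial)
  rw [hc1] at this
  exact one_ne_zero this

end C0Full

end

open C0Full OnePoint in
/-- The functor `C₀` is full: every nondegenerate ⋆-homomorphism
`φ : C₀(Y) → C_b(X) = M(C₀(X))` is of the form `C₀(f) : a ↦ a ∘ f` for a unique
continuous map `f : X → Y`. -/
theorem c0_functor_full
    {X Y : Type*} [TopologicalSpace X] [LocallyCompactSpace X] [T2Space X]
    [TopologicalSpace Y] [LocallyCompactSpace Y] [T2Space Y]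
    (φ : C₀(Y, ℂ) →⋆ₙₐ[ℂ] (X →ᵇ ℂ)) (hφ : NondegenerateC0 φ) :
    ∃! f : C(X, Y), ∀ (a : C₀(Y, ℂ)) (x : X), φ a x = a (f x) := by
  classical
  rcases isEmpty_or_nonempty X with hX | hX
  · refine ⟨⟨fun x => isEmptyElim x, continuous_iff_continuousAt.mpr fun x => isEmptyElim x⟩,
      fun a x => isEmptyElim x, fun g _ => ?_⟩
    ext x; exact isEmptyElim x
  · obtain ⟨x₀⟩ := hX
    obtain ⟨a₀, ha₀⟩ := exists_ne_zero φ hφ x₀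
    have hY : Nonempty Y := by
      by_contra hY
      rw [not_nonempty_iff] at hY
      apply ha₀
      have h0 : a₀ = 0 := by ext y; exact isEmptyElim y
      rw [h0, map_zero]
      rfl
    have hpt : ∀ x : X, pt φ x ≠ ∞ := by
      intro x hx
      obtain ⟨a, ha⟩ := exists_ne_zero φ hφ x
      have h1 : ext' a (pt φ x) = psi φ x (ext' a) := eval_pt φ x _
      rw [hx] at h1
      simp only [ext'_infty, psi_apply, res_ext'] at h1
      exact ha (by linear_combination -h1)
    set f0 : X → Y := fun x => (pt φ x).elim (Classical.arbitrary Y) id with hf0def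
    have hcoe : ∀ x, (f0 x : OnePoint Y) = pt φ x := by
      intro x
      rcases hq : pt φ x with _ | y
      · exact absurd hq (hpt x)
      · simp only [hf0def, hq]; rfl
    have hf0c : Continuous f0 := by
      rw [isOpenEmbedding_coe.toIsEmbedding.continuous_iff]
      have : ((fun y : Y => (y : OnePoint Y)) ∘ f0) = fun x => pt φ x := funext hcoe
      rw [this]
      exact continuous_pt φ
    have key : ∀ (a : C₀(Y, ℂ)) (x : X), φ a x = a (f0 x) := by
      intro a x
      have h1 : ext' a (pt φ x) = psi φ x (ext' a) := eval_pt φ x _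
      rw [← hcoe x] at h1
      simp only [ext'_coe, psi_apply, ext'_infty, res_ext'] at h1
      linear_combination -h1
    refine ⟨⟨f0, hf0c⟩, key, ?_⟩
    rintro g hg
    ext x
    show g x = f0 x
    by_contra hne
    obtain ⟨c, hc1, hc0⟩ :=
      exists_c0_sep (g x) ({f0 x} : Set Y) isClosed_singleton (by simpa using hne)
    have h1 : φ c x = c (g x) := hg c x
    have h2 : φ c x = c (f0 x) := key c x
    rw [hc1] at h1
    rw [hc0 (f0 x) rfl] at h2
    rw [h1] at h2
    exact one_ne_zero h2
end

section
/- Let X and Y be locally compact Hausdorff spaces and let φ : C₀(Y) → C_b(X) be a nondegenerate ⋆-homomorphism. Then for every x ∈ X, the map a ↦ φ(a)(x) is a nonzero ⋆-algebra homomorphism from C₀(Y) to ℂ (i.e., the composition of φ with evaluation at x is a nonzero character of C₀(Y)). -/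
open scoped ZeroAtInfty BoundedContinuousFunction

/-- Evaluation at a point as a non-unital star algebra homomorphism on bounded
continuous functions. -/
noncomputable def evalBCFHom {X : Type*} [TopologicalSpace X] (x : X) : (X →ᵇ ℂ) →⋆ₙₐ[ℂ] ℂ where
  toFun f := f x
  map_smul' _ _ := rfl
  map_zero' := rfl
  map_add' _ _ := rfl
  map_mul' _ _ := rfl
  map_star' _ := rfl

/-- If `φ : C₀(Y) → C_b(X)` is a nondegenerate ⋆-homomorphism, then for every `x ∈ X`
the composition of `φ` with evaluation at `x` is a nonzero character of `C₀(Y)`. -/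
theorem eval_comp_nondegenerate_hom_is_nonzero_character
    {X Y : Type*} [TopologicalSpace X] [LocallyCompactSpace X] [T2Space X]
    [TopologicalSpace Y] [LocallyCompactSpace Y] [T2Space Y]
    (φ : C₀(Y, ℂ) →⋆ₙₐ[ℂ] (X →ᵇ ℂ)) (hφ : NondegenerateC0 φ) :
    ∀ x : X, ∃ χ : C₀(Y, ℂ) →⋆ₙₐ[ℂ] ℂ, (∀ a : C₀(Y, ℂ), χ a = φ a x) ∧ χ ≠ 0 := by
  intro x
  refine ⟨(evalBCFHom x).comp φ, fun a => rfl, ?_⟩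
  intro hzero
  have hz : ∀ a : C₀(Y, ℂ), φ a x = 0 := by
    intro a
    have := congrFun (congrArg DFunLike.coe hzero) a
    exact this
  -- the set of functions vanishing at x is closed and contains the span
  have hclosed : IsClosed {f : C₀(X, ℂ) | f x = 0} := by
    have hc : Continuous fun f : C₀(X, ℂ) => f x :=
      (continuous_eval_const (F := X →ᵇ ℂ) x).comp
        (ZeroAtInftyContinuousMap.isometry_toBCF (α := X) (β := ℂ)).continuous
    exact isClosed_eq hc continuous_const
  have hsub : ((Submodule.span ℂ
      {h : C₀(X, ℂ) | ∃ (a : C₀(Y, ℂ)) (b : C₀(X, ℂ)), ∀ x, h x = φ a x * b x} :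
        Submodule ℂ C₀(X, ℂ)) : Set C₀(X, ℂ)) ⊆ {f : C₀(X, ℂ) | f x = 0} := by
    intro f hf
    induction hf using Submodule.span_induction with
    | mem h hh =>
      obtain ⟨a, b, hab⟩ := hh
      simp [Set.mem_setOf_eq, hab x, hz a]
    | zero => simp
    | add f g _ _ hf hg => simp [Set.mem_setOf_eq] at hf hg ⊢; simp [hf, hg]
    | smul c f _ hf => simp [Set.mem_setOf_eq] at hf ⊢; simp [hf]
  have hcl : closure ((Submodule.span ℂ
      {h : C₀(X, ℂ) | ∃ (a : C₀(Y, ℂ)) (b : C₀(X, ℂ)), ∀ x, h x = φ a x * b x} :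
        Submodule ℂ C₀(X, ℂ)) : Set C₀(X, ℂ)) ⊆ {f : C₀(X, ℂ) | f x = 0} :=
    closure_minimal hsub hclosed
  rw [hφ] at hcl
  -- produce a C₀ function which is 1 at x
  obtain ⟨g, hg1, _, hgsupp, -⟩ :=
    exists_continuous_one_zero_of_isCompact (isCompact_singleton (x := x))
      isClosed_empty (Set.disjoint_empty _)
  let b : C₀(X, ℂ) :=
    ⟨⟨fun y => (g y : ℂ), Complex.continuous_ofReal.comp g.continuous⟩,
      (HasCompactSupport.is_zero_at_infty
        ((hgsupp.comp_left (g := (Complex.ofReal : ℝ → ℂ)) Complex.ofReal_zero)))⟩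
  have hbx : b x = 1 := by
    have : g x = 1 := hg1 rfl
    simp [b, this]
  have := hcl (Set.mem_univ b)
  rw [Set.mem_setOf_eq, hbx] at this
  exact one_ne_zero this
end
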